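/- Consider variables x_{ij} (1 ≤ i ≤ j ≤ c) subject to the relations x_{mm} = Σ{x_{ij} : i ≠ m and j ≠ m} for m = 1,...,c−1, together with Σ_{i≤j} x_{ij} = 0. This system of c linear equations in the x_{ij} has rank exactly c. -/

import Mathlib

/-- The system of `c` linear equations in the variables `x_{ij}` (`i ≤ j`),
consisting of `x_{mm} = ∑ {x_{ij} : i ≠ m, j ≠ m}` for `m = 1,…,c-1` together
with `∑_{i≤j} x_{ij} = 0`, has rank exactly `c`: the `c` coefficient rows are
linearly independent. -/
theorem vertex_redundancy_relations_rank (c : ℕ) (hc : 0 < c)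
    (M : Fin c → ({p : Fin c × Fin c // p.1 ≤ p.2} → ℝ))
    (hM : ∀ m p, M m p =
      if (m : ℕ) = c - 1 then 1
      else if p.1.1 = m ∧ p.1.2 = m then 1
      else if p.1.1 ≠ m ∧ p.1.2 ≠ m then -1
      else 0) :
    LinearIndependent ℝ M := by
  rw [Fintype.linearIndependent_iff]
  intro g hg
  set last : Fin c := ⟨c - 1, by omega⟩ with hlast
  have hqle : ∀ m : Fin c, (m, last).1 ≤ (m, last).2 := by
    intro m
    simp only [Fin.le_def, hlast]
    omega
  set q : Fin c → {p : Fin c × Fin c // p.1 ≤ p.2} := fun m => ⟨(m, last), hqle m⟩ with hq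
  have hval : ∀ i m : Fin c, M i (q m) =
      if i = last then 1 else if i = m then 0 else -1 := by
    intro i m
    rw [hM]
    have hil : ((i : ℕ) = c - 1) ↔ i = last := by
      rw [Fin.ext_iff]
    by_cases h1 : i = last
    · rw [if_pos (hil.mpr h1), if_pos h1]
    · have h1' : ¬ (i : ℕ) = c - 1 := by rw [hil]; exact h1
      by_cases h2 : i = m
      · subst h2
        simp [hq, h1', Ne.symm h1, h1]
      · simp [hq, h1', Ne.symm h1, Ne.symm h2, h2]
        exact fun h => absurd h h1
  have hA : ∀ m : Fin c,
      ∑ i, g i * (if i = last then (1:ℝ) else if i = m then 0 else -1) = 0 := by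
    intro m
    have := congrFun hg (q m)
    simp only [Finset.sum_apply, Pi.smul_apply, smul_eq_mul, Pi.zero_apply] at this
    calc ∑ i, g i * (if i = last then (1:ℝ) else if i = m then 0 else -1)
        = ∑ i, g i * M i (q m) := by
          refine Finset.sum_congr rfl fun i _ => ?_
          rw [hval]
      _ = 0 := this
  have hsum : ∀ m : Fin c,
      2 * g last + (if m = last then 0 else g m) - ∑ i, g i = 0 := by
    intro m
    have h := hA m
    have hre : ∑ i, g i * (if i = last then (1:ℝ) else if i = m then 0 else -1)
        = ∑ i, ((if i = last then 2 * g i else 0)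
            + (if i = m ∧ ¬ i = last then g i else 0) - g i) := by
      refine Finset.sum_congr rfl fun i _ => ?_
      by_cases h1 : i = last
      · subst h1; simp; ring
      · by_cases h2 : i = m
        · subst h2; simp [h1]
        · simp [h1, h2]
    rw [hre] at h
    rw [Finset.sum_sub_distrib, Finset.sum_add_distrib] at h
    have e1 : ∑ i, (if i = last then 2 * g i else 0) = 2 * g last := by
      simp [Finset.sum_ite_eq']
    have e2 : ∑ i, (if i = m ∧ ¬ i = last then g i else 0)
        = if m = last then 0 else g m := by
      by_cases hm : m = last
      · subst hm; simp
      · rw [if_neg hm]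
        have : ∀ i : Fin c, (if i = m ∧ ¬ i = last then g i else 0)
            = if i = m then g i else 0 := by
          intro i
          by_cases h2 : i = m
          · subst h2; simp [hm]
          · simp [h2]
        simp only [this]
        simp [Finset.sum_ite_eq']
    rw [e1, e2] at h
    linarith [h]
  have hT := hsum last
  rw [if_pos rfl] at hT
  have hgm : ∀ m : Fin c, m ≠ last → g m = 0 := by
    intro m hm
    have h := hsum m
    rw [if_neg hm] at h
    linarith
  have hTsum : ∑ i, g i = g last := by
    rw [Finset.sum_eq_single last]
    · intro b _ hb; exact hgm b hb
    · intro h; exact absurd (Finset.mem_univ last) h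
  have hglast : g last = 0 := by
    rw [hTsum] at hT; linarith
  intro i
  by_cases h : i = last
  · rw [h]; exact hglast
  · exact hgm i h
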